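/- For all positive integers s and t with s > 1, t·C(s,t) ≤ A(s,t+1) − 2. -/

import Mathlib

/-- The Ackermann function of the paper, defined for positive integers `s, t`:
`A(1,t) = 2t`, `A(s,1) = 2`, and `A(s,t) = A(s-1, A(s,t-1))` for `s, t > 1`.
(The value at arguments equal to `0` is junk.) -/
def A : ℕ → ℕ → ℕ
  | 0, _ => 0
  | 1, t => 2 * t
  | _+2, 0 => 0
  | _+2, 1 => 2
  | s+2, t+2 => A (s+1) (A (s+2) (t+1))
termination_by s t => (s, t)

/-- The function `C` of Füredi and Hajnal, defined for positive integers `s, t`: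
`C(1,t) = 1`, `C(s,1) = 2` for `s > 1`, and `C(s,t) = C(s,t-1) * C(s-1, C(s,t-1))` for `s, t > 1`.
(The value at arguments equal to `0` is junk.) -/
def C : ℕ → ℕ → ℕ
  | 0, _ => 0
  | 1, _ => 1
  | _+2, 0 => 0
  | _+2, 1 => 2
  | s+2, t+2 => C (s+2) (t+1) * C (s+1) (C (s+2) (t+1))
termination_by s t => (s, t)

theorem two_mul_le_A : ∀ s t : ℕ, 1 ≤ s → 1 ≤ t → 2 * t ≤ A s t
  | 0, _, h, _ => absurd h (by omega)
  | 1, t, _, _ => by simp [A]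
  | _+2, 0, _, h => absurd h (by omega)
  | s+2, 1, _, _ => by simp [A]
  | s+2, t+2, _, _ => by
      have h1 := two_mul_le_A (s+2) (t+1) (by omega) (by omega)
      have h2 := two_mul_le_A (s+1) (A (s+2) (t+1)) (by omega) (by omega)
      have he : A (s+2) (t+2) = A (s+1) (A (s+2) (t+1)) := by simp [A]
      omega
termination_by s t => (s, t)

theorem A_double (s t : ℕ) (hs : 2 ≤ s) (ht : 1 ≤ t) : 2 * A s t ≤ A s (t+1) := by
  obtain ⟨s, rfl⟩ : ∃ s', s = s' + 2 := ⟨s - 2, by omega⟩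
  obtain ⟨t, rfl⟩ : ∃ t', t = t' + 1 := ⟨t - 1, by omega⟩
  have h1 := two_mul_le_A (s+2) (t+1) (by omega) (by omega)
  have h2 := two_mul_le_A (s+1) (A (s+2) (t+1)) (by omega) (by omega)
  have he : A (s+2) (t+2) = A (s+1) (A (s+2) (t+1)) := by simp [A]
  rw [show t + 1 + 1 = t + 2 from rfl]
  omega

theorem A_pow (s t : ℕ) (hs : 2 ≤ s) (ht : 1 ≤ t) :
    ∀ k : ℕ, 2 ^ k * A s t ≤ A s (t + k) := by
  intro k
  induction k with
  | zero => simp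
  | succ k ih =>
      have hd := A_double s (t + k) hs (by omega)
      calc 2 ^ (k+1) * A s t = 2 * (2 ^ k * A s t) := by ring
        _ ≤ 2 * A s (t + k) := by omega
        _ ≤ A s (t + k + 1) := hd

theorem one_le_C : ∀ s t : ℕ, 1 ≤ s → 1 ≤ t → 1 ≤ C s t
  | 0, _, h, _ => absurd h (by omega)
  | 1, t, _, _ => by simp [C]
  | _+2, 0, _, h => absurd h (by omega)
  | s+2, 1, _, _ => by simp [C]
  | s+2, t+2, _, _ => by
      have h1 := one_le_C (s+2) (t+1) (by omega) (by omega)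
      have h2 := one_le_C (s+1) (C (s+2) (t+1)) (by omega) (by omega)
      have he : C (s+2) (t+2) = C (s+2) (t+1) * C (s+1) (C (s+2) (t+1)) := by simp [C]
      nlinarith
termination_by s t => (s, t)

theorem two_le_C (s t : ℕ) (hs : 2 ≤ s) (ht : 1 ≤ t) : 2 ≤ C s t := by
  obtain ⟨s, rfl⟩ : ∃ s', s = s' + 2 := ⟨s - 2, by omega⟩
  induction t with
  | zero => omega
  | succ t ih =>
      rcases Nat.eq_zero_or_pos t with rfl | htt
      · simp [C]
      · have h1 := ih (by omega)
        have h2 := one_le_C (s+1) (C (s+2) t) (by omega) (by omega)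
        obtain ⟨t, rfl⟩ : ∃ t', t = t' + 1 := ⟨t - 1, by omega⟩
        have he : C (s+2) (t+2) = C (s+2) (t+1) * C (s+1) (C (s+2) (t+1)) := by simp [C]
        nlinarith

theorem C_two (t : ℕ) (ht : 1 ≤ t) : C 2 t = 2 := by
  induction t with
  | zero => omega
  | succ t ih =>
      rcases Nat.eq_zero_or_pos t with rfl | htt
      · simp [C]
      · obtain ⟨t, rfl⟩ : ∃ t', t = t' + 1 := ⟨t - 1, by omega⟩
        have he : C 2 (t+2) = C 2 (t+1) * C 1 (C 2 (t+1)) := by simp [C]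
        rw [he, ih (by omega)]
        simp [C]

theorem A_two_eq (t : ℕ) (ht : 1 ≤ t) : A 2 t = 2 ^ t := by
  induction t with
  | zero => omega
  | succ t ih =>
      rcases Nat.eq_zero_or_pos t with rfl | htt
      · simp [A]
      · obtain ⟨t, rfl⟩ : ∃ t', t = t' + 1 := ⟨t - 1, by omega⟩
        have he : A 2 (t+2) = A 1 (A 2 (t+1)) := by simp [A]
        rw [he, ih (by omega)]
        simp [A]
        ring

theorem A_at_two : ∀ s : ℕ, 1 ≤ s → A s 2 = 4
  | 0, h => absurd h (by omega)
  | 1, _ => by simp [A]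
  | s+2, _ => by
      have he : A (s+2) 2 = A (s+1) (A (s+2) 1) := by simp [A]
      have h1 : A (s+2) 1 = 2 := by simp [A]
      rw [he, h1, A_at_two (s+1) (by omega)]

theorem main_aux : ∀ s t : ℕ, 2 ≤ s → 1 ≤ t → t * C s t + 2 ≤ A s (t + 1)
  | 0, _, h, _ => absurd h (by omega)
  | 1, _, h, _ => absurd h (by omega)
  | 2, t, _, ht => by
      rw [C_two t ht, A_two_eq (t+1) (by omega)]
      have h2 : t < 2 ^ t := Nat.lt_two_pow_self (n := t)
      calc t * 2 + 2 = 2 * (t + 1) := by ring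
        _ ≤ 2 * 2 ^ t := by omega
        _ = 2 ^ (t+1) := by ring
  | s+3, 0, _, h => absurd h (by omega)
  | s+3, 1, _, _ => by
      have h1 : C (s+3) 1 = 2 := by simp [C]
      rw [h1, A_at_two (s+3) (by omega)]
  | s+3, t+2, _, _ => by
      set c := C (s+3) (t+1) with hc
      set a := A (s+3) (t+2) with ha
      have ih1 : (t+1) * c + 2 ≤ a := main_aux (s+3) (t+1) (by omega) (by omega)
      have hc2 : 2 ≤ c := two_le_C (s+3) (t+1) (by omega) (by omega)
      have ih2 : c * C (s+2) c + 2 ≤ A (s+2) (c+1) :=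
        main_aux (s+2) c (by omega) (by omega)
      have heC : C (s+3) (t+2) = c * C (s+2) c := by rw [hc]; simp [C]
      have heA : A (s+3) (t+3) = A (s+2) a := by rw [ha]; simp [A]
      rw [show t+2+1 = t+3 from rfl, heA, heC]
      -- a ≥ (t+1)*c + 2 ≥ c + 1 + (t+1), so A (s+2) a ≥ 2^(a-(c+1)) * A (s+2) (c+1)
      have h6 : t * 1 ≤ t * c := Nat.mul_le_mul_left _ (by omega)
      have h7 : (t+1) * c = t * c + c := by ring
      have hsplit : a = (c + 1) + (a - (c + 1)) := by omega
      have hpow := A_pow (s+2) (c+1) (by omega) (by omega) (a - (c+1))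
      rw [← hsplit] at hpow
      have hk : t + 1 ≤ a - (c + 1) := by omega
      have hmono : 2 ^ (t+1) ≤ 2 ^ (a - (c+1)) := Nat.pow_le_pow_right (by omega) hk
      have htp : t + 2 ≤ 2 ^ (t+1) := by
        have := Nat.lt_two_pow_self (n := t+1); omega
      have hB : 1 ≤ A (s+2) (c+1) := by nlinarith
      calc (t+2) * (c * C (s+2) c) + 2
          ≤ (t+2) * (A (s+2) (c+1) - 2) + 2 := by
            have : c * C (s+2) c ≤ A (s+2) (c+1) - 2 := by omega
            nlinarith
        _ ≤ (t+2) * A (s+2) (c+1) := by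
            have h4 : 2 ≤ A (s+2) (c+1) := by omega
            have : (t+2) * (A (s+2) (c+1) - 2) + (t+2) * 2 = (t+2) * A (s+2) (c+1) := by
              rw [← Nat.mul_add]; congr 1; omega
            omega
        _ ≤ 2 ^ (t+1) * A (s+2) (c+1) := Nat.mul_le_mul_right _ htp
        _ ≤ 2 ^ (a - (c+1)) * A (s+2) (c+1) := Nat.mul_le_mul_right _ hmono
        _ ≤ A (s+2) a := hpow
termination_by s t => (s, t)

/-- For all positive integers `s` and `t` with `s > 1`, `t * C(s,t) ≤ A(s,t+1) - 2`. -/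
theorem mul_C_le_ackermann_sub_two (s t : ℕ) (hs : 1 < s) (ht : 0 < t) :
    t * C s t ≤ A s (t + 1) - 2 := by
  have := main_aux s t (by omega) (by omega)
  omega
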